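/- Let A be a data matrix and let p* be the algorithm's distribution. Then for every sampling distribution q on the entries of A, ε₁(p*) ≤ 3·ε₁(q); in particular ε₁(p*) is within a factor 3 of the infimum of ε₁ over all sampling distributions. -/

import Mathlib

open Matrix

/-- The spectral norm (ℓ2→ℓ2 operator norm) of a rectangular real matrix. -/
noncomputable def specNorm {m n : ℕ} (A : Matrix (Fin m) (Fin n) ℝ) : ℝ :=
  ‖(Matrix.toEuclideanLin A).toContinuousLinearMap‖

/-- `σ(p)² = max{ ‖D_r(p) − A Aᵀ‖₂, ‖D_c(p) − Aᵀ A‖₂ }`. -/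
noncomputable def sigmaSq {m n : ℕ} (A : Matrix (Fin m) (Fin n) ℝ)
    (p : Fin m → Fin n → ℝ) : ℝ :=
  max (specNorm (Matrix.diagonal (fun i => ∑ j, A i j ^ 2 / p i j) - A * Aᵀ))
      (specNorm (Matrix.diagonal (fun j => ∑ i, A i j ^ 2 / p i j) - Aᵀ * A))

/-- `R(p)`: the maximum over pairs `(i,j)` with `p i j > 0` of `‖A − B^(i,j)‖₂`. -/
noncomputable def Rp {m n : ℕ} (A : Matrix (Fin m) (Fin n) ℝ)
    (p : Fin m → Fin n → ℝ) : ℝ :=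
  sSup {x : ℝ | ∃ i j, 0 < p i j ∧
    x = specNorm (A - Matrix.single i j (A i j / p i j))}

/-- `ε₁(p) = inf{ ε > 0 : (m+n)·exp(−sε²/(σ(p)² + R(p)·ε/3)) ≤ δ }`. -/
noncomputable def eps1 {m n : ℕ} (s : ℕ) (δ : ℝ) (A : Matrix (Fin m) (Fin n) ℝ)
    (p : Fin m → Fin n → ℝ) : ℝ :=
  sInf {ε : ℝ | 0 < ε ∧
    (m + n : ℝ) * Real.exp (-(s * ε ^ 2) / (sigmaSq A p + Rp A p * ε / 3)) ≤ δ}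

/-- `α = √(log((m+n)/δ)/s)`. -/
noncomputable def alphaC (m n s : ℕ) (δ : ℝ) : ℝ :=
  Real.sqrt (Real.log ((m + n : ℝ) / δ) / s)

/-- `β = log((m+n)/δ)/(3s)`. -/
noncomputable def betaC (m n s : ℕ) (δ : ℝ) : ℝ :=
  Real.log ((m + n : ℝ) / δ) / (3 * s)

/-- `ρ_i(ζ) = ( α z_i/(2ζ) + √( (α z_i/(2ζ))² + β z_i/ζ ) )²`. -/
noncomputable def rhoFun (α β z ζ : ℝ) : ℝ :=
  (α * z / (2 * ζ) + Real.sqrt ((α * z / (2 * ζ)) ^ 2 + β * z / ζ)) ^ 2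

/-- The algorithm's distribution: `p* i j = ρ_i(ζ₁) · |A i j| / ‖A_(i)‖₁`
with `z_i = ‖A_(i)‖₁`. -/
noncomputable def pstar {m n : ℕ} (α β : ℝ) (A : Matrix (Fin m) (Fin n) ℝ)
    (ζ₁ : ℝ) : Fin m → Fin n → ℝ :=
  fun i j => rhoFun α β (∑ j', |A i j'|) ζ₁ * |A i j| / ∑ j', |A i j'|


open scoped Matrix.Norms.L2Operator

lemma specNorm_eq {m n : ℕ} (A : Matrix (Fin m) (Fin n) ℝ) : specNorm A = ‖A‖ := rfl

lemma eucl_abs_le_norm {k : ℕ} (x : EuclideanSpace ℝ (Fin k)) (i : Fin k) : |x i| ≤ ‖x‖ := by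
  rw [EuclideanSpace.norm_eq, ← Real.sqrt_sq_eq_abs]
  apply Real.sqrt_le_sqrt
  have : x i ^ 2 ≤ ∑ j, x j ^ 2 :=
    Finset.single_le_sum (f := fun j => x j ^ 2) (fun j _ => sq_nonneg _) (Finset.mem_univ i)
  simpa [Real.norm_eq_abs, sq_abs] using this

lemma abs_entry_le_specNorm {m n : ℕ} (A : Matrix (Fin m) (Fin n) ℝ) (i : Fin m) (j : Fin n) :
    |A i j| ≤ ‖A‖ := by
  have h := A.l2_opNorm_mulVec (EuclideanSpace.single j 1)
  have hx : ‖EuclideanSpace.single j (1:ℝ)‖ = 1 := by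
    simp [EuclideanSpace.norm_single]
  have hv : ((EuclideanSpace.equiv (Fin m) ℝ).symm (A *ᵥ (EuclideanSpace.single j 1)) : EuclideanSpace ℝ (Fin m)) i = A i j := by
    show (A *ᵥ (EuclideanSpace.single j 1) : Fin m → ℝ) i = A i j
    have : ((EuclideanSpace.single j (1:ℝ)) : Fin n → ℝ) = Pi.single j 1 := rfl
    rw [this, Matrix.mulVec_single]; exact mul_one _
  calc |A i j| = |((EuclideanSpace.equiv (Fin m) ℝ).symm (A *ᵥ (EuclideanSpace.single j 1)) : EuclideanSpace ℝ (Fin m)) i| := by rw [hv]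
    _ ≤ ‖(EuclideanSpace.equiv (Fin m) ℝ).symm (A *ᵥ (EuclideanSpace.single j 1))‖ := eucl_abs_le_norm _ i
    _ ≤ ‖A‖ * 1 := by simpa [hx] using h
    _ = ‖A‖ := mul_one _

lemma specNorm_le_bound {m n : ℕ} (A : Matrix (Fin m) (Fin n) ℝ) (c : ℝ) (hc : 0 ≤ c)
    (h : ∀ x : EuclideanSpace ℝ (Fin n),
      ‖((EuclideanSpace.equiv (Fin m) ℝ).symm (A *ᵥ x) : EuclideanSpace ℝ (Fin m))‖ ≤ c * ‖x‖) :
    ‖A‖ ≤ c := by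
  rw [Matrix.l2_opNorm_def]
  exact ContinuousLinearMap.opNorm_le_bound _ hc (fun x => h x)

lemma specNorm_diagonal_le {k : ℕ} (d : Fin k → ℝ) (c : ℝ) (hc : 0 ≤ c)
    (hd : ∀ i, |d i| ≤ c) : ‖(Matrix.diagonal d : Matrix (Fin k) (Fin k) ℝ)‖ ≤ c := by
  apply specNorm_le_bound _ c hc
  intro x
  rw [EuclideanSpace.norm_eq, EuclideanSpace.norm_eq]
  rw [← Real.sqrt_sq hc, ← Real.sqrt_mul (sq_nonneg c)]
  apply Real.sqrt_le_sqrt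
  rw [Finset.mul_sum]
  apply Finset.sum_le_sum
  intro i _
  have : ((EuclideanSpace.equiv (Fin k) ℝ).symm ((Matrix.diagonal d) *ᵥ x) : EuclideanSpace ℝ (Fin k)) i = d i * x i := by
    show ((Matrix.diagonal d) *ᵥ x : Fin k → ℝ) i = d i * x i
    simp [Matrix.mulVec_diagonal]
  rw [this]
  simp only [Real.norm_eq_abs, sq_abs]
  rw [mul_pow]
  have h1 : (d i)^2 ≤ c^2 := by
    have := hd i; nlinarith [abs_nonneg (d i), sq_abs (d i)]
  nlinarith [sq_nonneg (x i)]

lemma specNorm_stdBasis_le {m n : ℕ} (i : Fin m) (j : Fin n) (c : ℝ) :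
    ‖(Matrix.single i j c : Matrix (Fin m) (Fin n) ℝ)‖ ≤ |c| := by
  apply specNorm_le_bound _ _ (abs_nonneg c)
  intro x
  have hv : ((EuclideanSpace.equiv (Fin m) ℝ).symm ((Matrix.single i j c) *ᵥ x) : EuclideanSpace ℝ (Fin m))
      = EuclideanSpace.single i (c * x j) := by
    apply PiLp.ext
    intro i'
    show ((Matrix.single i j c) *ᵥ x : Fin m → ℝ) i' = _
    rw [EuclideanSpace.single_apply]
    simp [Matrix.mulVec, Matrix.single, dotProduct, ite_and, Finset.sum_ite_eq]
    by_cases h : i = i'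
    · simp [h]
    · simp [h, Ne.symm h]
  rw [hv, EuclideanSpace.norm_single]
  rw [Real.norm_eq_abs, abs_mul]
  exact mul_le_mul_of_nonneg_left (eucl_abs_le_norm x j) (abs_nonneg c)

lemma rhoFun_nonneg (α β z ζ : ℝ) : 0 ≤ rhoFun α β z ζ := sq_nonneg _

lemma rhoFun_identity {α β z ζ : ℝ} (hα : 0 ≤ α) (hβ : 0 ≤ β) (hz : 0 ≤ z) (hζ : 0 < ζ) :
    ζ * rhoFun α β z ζ = α * z * Real.sqrt (rhoFun α β z ζ) + β * z := by
  have ha : 0 ≤ α * z / (2 * ζ) := by positivity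
  have hb : 0 ≤ β * z / ζ := by positivity
  set a := α * z / (2 * ζ) with ha_def
  set b := β * z / ζ with hb_def
  set s := Real.sqrt (a^2 + b) with hs_def
  have hs0 : 0 ≤ s := Real.sqrt_nonneg _
  have hs : s^2 = a^2 + b := Real.sq_sqrt (by positivity)
  have hrho : rhoFun α β z ζ = (a + s)^2 := rfl
  have hr : Real.sqrt (rhoFun α β z ζ) = a + s := by
    rw [hrho]; exact Real.sqrt_sq (by positivity)
  have h2 : α * z = 2 * ζ * a := by rw [ha_def]; field_simp
  have h3 : β * z = ζ * b := by rw [hb_def]; field_simp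
  rw [hr, hrho, h2, h3]
  nlinarith [hs]

lemma rhoFun_pos {α β z ζ : ℝ} (hα : 0 < α) (hβ : 0 ≤ β) (hz : 0 < z) (hζ : 0 < ζ) :
    0 < rhoFun α β z ζ := by
  have h : 0 < α * z / (2 * ζ) := by positivity
  have : 0 < α * z / (2 * ζ) + Real.sqrt ((α * z / (2 * ζ)) ^ 2 + β * z / ζ) :=
    lt_of_lt_of_le h (le_add_of_nonneg_right (Real.sqrt_nonneg _))
  exact pow_pos this 2

lemma rhoFun_sqrt_bound {α β z ζ : ℝ} (hα : 0 < α) (hβ : 0 ≤ β) (hz : 0 < z) (hζ : 0 < ζ) :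
    α * z ≤ ζ * Real.sqrt (rhoFun α β z ζ) := by
  have hid := rhoFun_identity hα.le hβ hz.le hζ
  have hρ := rhoFun_pos hα hβ hz hζ
  set ρ := rhoFun α β z ζ
  have hsρ : 0 < Real.sqrt ρ := Real.sqrt_pos.2 hρ
  have hsq : Real.sqrt ρ ^ 2 = ρ := Real.sq_sqrt hρ.le
  have h1 : α * z * Real.sqrt ρ ≤ ζ * Real.sqrt ρ ^ 2 := by
    rw [hsq, hid]; nlinarith
  have := le_of_mul_le_mul_right (by nlinarith [h1] : α * z * Real.sqrt ρ ≤ ζ * Real.sqrt ρ * Real.sqrt ρ) hsρ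
  exact this

lemma rhoFun_z_div_le {α β z ζ : ℝ} (hα : 0 < α) (hβ : 0 < β) (hz : 0 < z) (hζ : 0 < ζ) :
    z / rhoFun α β z ζ ≤ ζ / β := by
  have hid := rhoFun_identity hα.le hβ.le hz.le hζ
  have hρ := rhoFun_pos hα hβ.le hz hζ
  rw [div_le_div_iff₀ hρ hβ]
  nlinarith [hid, mul_nonneg (mul_nonneg hα.le hz.le) (Real.sqrt_nonneg (rhoFun α β z ζ))]

lemma rhoFun_zsq_div_le {α β z ζ : ℝ} (hα : 0 < α) (hβ : 0 ≤ β) (hz : 0 < z) (hζ : 0 < ζ) :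
    z^2 / rhoFun α β z ζ ≤ ζ^2 / α^2 := by
  have hρ := rhoFun_pos hα hβ hz hζ
  have h := rhoFun_sqrt_bound hα hβ hz hζ
  have hsq : Real.sqrt (rhoFun α β z ζ) ^ 2 = rhoFun α β z ζ := Real.sq_sqrt hρ.le
  rw [div_le_div_iff₀ hρ (by positivity)]
  nlinarith [h, mul_pos hα hz, mul_pos hζ (Real.sqrt_pos.2 hρ)]

lemma rhoFun_ge {α β z ζ : ℝ} (hα : 0 < α) (hβ : 0 ≤ β) (hz : 0 < z) (hζ : 0 < ζ) :
    α^2 * z^2 / ζ^2 ≤ rhoFun α β z ζ := by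
  have hρ := rhoFun_pos hα hβ hz hζ
  have h := rhoFun_sqrt_bound hα hβ hz hζ
  have hsq : Real.sqrt (rhoFun α β z ζ) ^ 2 = rhoFun α β z ζ := Real.sq_sqrt hρ.le
  rw [div_le_iff₀ (by positivity)]
  nlinarith [h, mul_pos hα hz, mul_pos hζ (Real.sqrt_pos.2 hρ)]

lemma rhoFun_mono {α β z ζ r : ℝ} (hα : 0 < α) (hβ : 0 < β) (hz : 0 < z) (hζ : 0 < ζ)
    (hr : 0 < r) (hle : r ≤ rhoFun α β z ζ) :
    ζ ≤ α * z / Real.sqrt r + β * z / r := by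
  have hid := rhoFun_identity hα.le hβ.le hz.le hζ
  have hρ := rhoFun_pos hα hβ.le hz hζ
  set ρ := rhoFun α β z ζ
  have hsρ : 0 < Real.sqrt ρ := Real.sqrt_pos.2 hρ
  have hsr : 0 < Real.sqrt r := Real.sqrt_pos.2 hr
  have hsq : Real.sqrt ρ ^ 2 = ρ := Real.sq_sqrt hρ.le
  have hkey : ζ = α * z / Real.sqrt ρ + β * z / ρ := by
    field_simp
    linear_combination Real.sqrt ρ * hid + α * z * hsq
  rw [hkey]
  have h1 : α * z / Real.sqrt ρ ≤ α * z / Real.sqrt r := by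
    apply div_le_div_of_nonneg_left (by positivity) hsr
    exact Real.sqrt_le_sqrt hle
  have h2 : β * z / ρ ≤ β * z / r := by
    apply div_le_div_of_nonneg_left (by positivity) hr hle
  linarith


lemma le_of_sq_le_sq'' {a b : ℝ} (ha : 0 ≤ a) (hb : 0 ≤ b) (h : a^2 ≤ b^2) : a ≤ b := by
  nlinarith

lemma quad_bound {u v ε : ℝ} (hu : 0 ≤ u) (hv : 0 ≤ v) (hε : 0 < ε)
    (h : u^2 + v*ε ≤ ε^2) : u + v ≤ 5/4*ε := by
  have hvε : v ≤ ε := by nlinarith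
  have h54 : 0 ≤ 5/4*ε - v := by linarith
  have h2 : u^2 ≤ (5/4*ε - v)^2 := by nlinarith [sq_nonneg (3/4*ε - v)]
  have := le_of_sq_le_sq'' hu h54 h2
  linarith

lemma exp_cond {mn δ D x : ℝ} (hmn : 1 < mn) (hδ0 : 0 < δ) (hD : 0 < D) :
    mn * Real.exp (-x / D) ≤ δ ↔ Real.log (mn / δ) * D ≤ x := by
  have hmn0 : 0 < mn := lt_trans one_pos hmn
  have h1 : mn * Real.exp (-x / D) ≤ δ ↔ Real.exp (-x / D) ≤ δ / mn := by
    rw [le_div_iff₀ hmn0, mul_comm]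
  rw [h1, ← Real.le_log_iff_exp_le (by positivity)]
  have h2 : Real.log (δ / mn) = - Real.log (mn / δ) := by
    rw [← Real.log_inv, inv_div]
  rw [h2, neg_div, neg_le_neg_iff, le_div_iff₀ hD]

lemma le_Rp {m n : ℕ} (A : Matrix (Fin m) (Fin n) ℝ) (p : Fin m → Fin n → ℝ)
    (i : Fin m) (j : Fin n) (h : 0 < p i j) :
    specNorm (A - Matrix.single i j (A i j / p i j)) ≤ Rp A p := by
  apply le_csSup
  · have hsub : {x : ℝ | ∃ i j, 0 < p i j ∧
        x = specNorm (A - Matrix.single i j (A i j / p i j))} ⊆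
        (fun y : Fin m × Fin n =>
          specNorm (A - Matrix.single y.1 y.2 (A y.1 y.2 / p y.1 y.2))) '' Set.univ := by
      rintro x ⟨i', j', _, rfl⟩
      exact ⟨(i', j'), trivial, rfl⟩
    exact BddAbove.mono hsub ((Set.finite_univ.image _).bddAbove)
  · exact ⟨i, j, h, rfl⟩

lemma sigmaSq_nonneg {m n : ℕ} (A : Matrix (Fin m) (Fin n) ℝ) (p : Fin m → Fin n → ℝ) :
    0 ≤ sigmaSq A p :=
  le_trans (by rw [specNorm_eq]; exact norm_nonneg _) (le_max_left _ _)


lemma aux_conv {L s σ2 R ε α β : ℝ} (hs : 0 < s) (hα2 : α^2 = L/s) (hβ : β = L/(3*s)) :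
    L * (σ2 + R*ε/3) ≤ s*ε^2 ↔ α^2*σ2 + β*R*ε ≤ ε^2 := by
  have key : α^2*σ2 + β*R*ε = L*(σ2 + R*ε/3)/s := by
    rw [hα2, hβ]; field_simp
  rw [key, div_le_iff₀ hs, mul_comm (ε^2) s]

lemma aux_conv2 {L s σ2 R ε α β : ℝ} (hs : 0 < s) (hα2 : α^2 = L/s) (hβ : β = L/(3*s))
    (h : α^2*σ2 + 3*(β*R)*ε ≤ 9*ε^2) : L * (σ2 + R*(3*ε)/3) ≤ s*(3*ε)^2 := by
  rw [aux_conv (ε := 3*ε) hs hα2 hβ]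
  nlinarith [h]

lemma aux_eps0 {u v : ℝ} (hu : 0 ≤ u) (hv : 0 ≤ v) : u^2 + v*(u+v) ≤ (u+v)^2 := by nlinarith

lemma aux_alphaT {a T Z mr ζ : ℝ} (hm : 0 < mr) (h1 : 50*mr*T^2 ≤ Z^2)
    (h2 : a^2*Z^2/mr ≤ ζ^2) (ha : 0 < a) (hT : 0 ≤ T) (hζ : 0 < ζ) : a*T ≤ 3/20*ζ := by
  apply le_of_sq_le_sq'' (by positivity) (by positivity)
  have e1 : a^2*Z^2 ≤ mr * ζ^2 := by
    rw [div_le_iff₀ hm] at h2; linarith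
  have e2 : (a*T)^2 * (50*mr) ≤ a^2 * Z^2 := by nlinarith [mul_le_mul_of_nonneg_left h1 (sq_nonneg a)]
  have e3 : mr * ((a*T)^2 * 50) ≤ mr * ζ^2 := by nlinarith [e1, e2]
  have e4 := le_of_mul_le_mul_left e3 hm
  nlinarith [e4]

lemma aux_betaT {b T Z mr ζ : ℝ} (hm : 50 ≤ mr) (h1 : 50*mr*T^2 ≤ Z^2)
    (h2 : b*Z ≤ ζ) (hb : 0 < b) (hT : 0 ≤ T) (hZ : 0 ≤ Z) (hζ : 0 < ζ) : b*T ≤ 1/50*ζ := by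
  apply le_of_sq_le_sq'' (by positivity) (by positivity)
  have h50 : (2500:ℝ) ≤ 50*mr := by nlinarith
  have e2 : (b*T)^2 * (50*mr) ≤ b^2 * Z^2 := by nlinarith [mul_le_mul_of_nonneg_left h1 (sq_nonneg b)]
  have h3 : b^2*Z^2 ≤ ζ^2 := by nlinarith [mul_nonneg hb.le hZ]
  have e5 : (b*T)^2 * 2500 ≤ ζ^2 := by
    nlinarith [mul_le_mul_of_nonneg_left h50 (sq_nonneg (b*T)), e2, h3]
  nlinarith [e5]

lemma aux_b1 {α σ2 ζ T : ℝ} (hα : 0 < α) (hT : 0 ≤ T) (h : σ2 ≤ ζ^2/α^2 + T^2)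
    (hαT : α*T ≤ 3/20*ζ) : α^2*σ2 ≤ 409/400*ζ^2 := by
  have h2 := mul_le_mul_of_nonneg_left h (sq_nonneg α)
  have e : α^2*(ζ^2/α^2 + T^2) = ζ^2 + (α*T)^2 := by field_simp
  nlinarith [h2, e, hαT, mul_nonneg hα.le hT]

lemma aux_b2 {β R ζ T : ℝ} (hβ : 0 < β) (h : R ≤ ζ/β + T) (hβT : β*T ≤ 1/50*ζ) :
    β*R ≤ 51/50*ζ := by
  have h2 := mul_le_mul_of_nonneg_left h hβ.le
  have e : β*(ζ/β + T) = ζ + β*T := by field_simp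
  nlinarith [h2, e, hβT]

lemma aux_main {X Y ζ ε : ℝ} (hX : X ≤ 409/400*ζ^2) (hY : Y ≤ 51/50*ζ) (hζ : 0 ≤ ζ)
    (hε : 0 < ε) (hζε : ζ ≤ 125/83*ε) : X + 3*Y*ε ≤ 9*ε^2 := by
  nlinarith [mul_le_mul_of_nonneg_right hY hε.le, mul_le_mul_of_nonneg_right hζε hε.le,
    mul_le_mul_of_nonneg_right hζε hζ]

lemma Rp_pos {m n : ℕ} (hm : 2 ≤ m) (A : Matrix (Fin m) (Fin n) ℝ) (p : Fin m → Fin n → ℝ)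
    (hrows : ∀ i, ∃ j, A i j ≠ 0) (i0 : Fin m) (j0 : Fin n) (hp : 0 < p i0 j0) : 0 < Rp A p := by
  have hel := le_Rp A p i0 j0 hp
  have hx : 0 < specNorm (A - Matrix.single i0 j0 (A i0 j0 / p i0 j0)) := by
    rw [specNorm_eq]
    apply lt_of_le_of_ne (norm_nonneg _)
    intro h0
    have hAeq : A = Matrix.single i0 j0 (A i0 j0 / p i0 j0) :=
      sub_eq_zero.mp (norm_eq_zero.mp h0.symm)
    have : Nontrivial (Fin m) := Fin.nontrivial_iff_two_le.mpr hm
    obtain ⟨i1, hi1⟩ := exists_ne i0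
    obtain ⟨j1, hj1⟩ := hrows i1
    apply hj1
    rw [hAeq]
    simp only [Matrix.single, Matrix.of_apply, if_neg (by tauto : ¬(i0 = i1 ∧ j0 = j1))]
  linarith [hel, hx]

/-- If `A` is a data matrix (nonzero, `min_i ‖A_(i)‖₁ ≥ max_j ‖A^(j)‖₁`,
`‖A‖₁² ≥ 50·m·‖A‖₂²`, `m ≥ 50`) then for the algorithm's distribution `p*` and every
sampling distribution `q` on the entries of `A`, `ε₁(p*) ≤ 3·ε₁(q)`. -/
theorem stmt16 (m n : ℕ) (hm : 50 ≤ m) (hn : 0 < n)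
    (A : Matrix (Fin m) (Fin n) ℝ) (hA : A ≠ 0)
    (hskew : ∀ i j, (∑ i', |A i' j|) ≤ ∑ j', |A i j'|)
    (hnorm : 50 * m * specNorm A ^ 2 ≤ (∑ i, ∑ j, |A i j|) ^ 2)
    (s : ℕ) (hs : 1 ≤ s) (δ : ℝ) (hδ : δ ∈ Set.Ioo (0 : ℝ) 1)
    (ζ₁ : ℝ) (hζ : 0 < ζ₁)
    (hρsum : ∑ i, rhoFun (alphaC m n s δ) (betaC m n s δ) (∑ j, |A i j|) ζ₁ = 1) :
    ∀ q : Fin m → Fin n → ℝ, (∀ i j, 0 ≤ q i j) → (∑ i, ∑ j, q i j) = 1 →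
      (∀ i j, A i j ≠ 0 → 0 < q i j) →
      eps1 s δ A (pstar (alphaC m n s δ) (betaC m n s δ) A ζ₁) ≤ 3 * eps1 s δ A q := by
  intro q hq0 hqsum hqpos
  obtain ⟨hδ0, hδ1⟩ := hδ
  set L := Real.log ((m + n : ℝ) / δ) with hL_def
  have hm0 : 0 < m := by omega
  have hm' : (0:ℝ) < (m:ℝ) := by exact_mod_cast hm0
  have hm50 : (50:ℝ) ≤ (m:ℝ) := by exact_mod_cast hm
  have hmn : (1:ℝ) < (m + n : ℝ) := by
    have h51 : (51:ℕ) ≤ m + n := by omega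
    have := Nat.cast_le (α := ℝ) |>.mpr h51
    push_cast at this ⊢; linarith only [this]
  have hL : 0 < L := Real.log_pos (by rw [lt_div_iff₀ hδ0]; nlinarith)
  have hs' : (0:ℝ) < (s:ℝ) := by exact_mod_cast Nat.lt_of_lt_of_le Nat.zero_lt_one hs
  set α := alphaC m n s δ with hα_def
  set β := betaC m n s δ with hβ_def
  have hα2 : α^2 = L / s := Real.sq_sqrt (by positivity)
  have hα : 0 < α := Real.sqrt_pos.2 (by positivity)
  have hβ_eq : β = L / (3*s) := rfl
  have hβ : 0 < β := by rw [hβ_eq]; positivity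
  set z : Fin m → ℝ := fun i => ∑ j, |A i j| with hz_def
  have hz_apply : ∀ i, z i = ∑ j, |A i j| := fun _ => rfl
  set Z := ∑ i, z i with hZ_def
  have hZ_def' : Z = ∑ i, z i := rfl
  set T := specNorm A with hT_def
  have hT_eq : T = ‖A‖ := specNorm_eq A
  have hTsq : 50 * m * T^2 ≤ Z^2 := hnorm
  set ρ : Fin m → ℝ := fun i => rhoFun α β (z i) ζ₁ with hρ_def
  have hρ_apply : ∀ i, ρ i = rhoFun α β (z i) ζ₁ := fun _ => rfl
  have hρsum' : ∑ i, ρ i = 1 := hρsum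
  set p := pstar α β A ζ₁ with hp_def
  have hpval : ∀ i j, p i j = ρ i * |A i j| / z i := fun i j => rfl
  clear_value L α β z Z T ρ p
  clear hρsum hnorm hz_def hρ_def hp_def hT_def hZ_def
  -- basic positivity
  have hT0 : 0 ≤ T := by rw [hT_eq]; exact norm_nonneg _
  have hzpos : ∀ i, 0 < z i := by
    have hex : ∃ i j, A i j ≠ 0 := by
      by_contra hcon; push_neg at hcon
      exact hA (by ext i j; simpa using hcon i j)
    obtain ⟨i0, j0, hij0⟩ := hex
    intro i
    have h1 : |A i0 j0| ≤ ∑ i', |A i' j0| :=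
      Finset.single_le_sum (f := fun i' => |A i' j0|) (fun _ _ => abs_nonneg _) (Finset.mem_univ i0)
    have h2 := hskew i j0
    have h3 : 0 < |A i0 j0| := abs_pos.2 hij0
    rw [hz_apply]; linarith only [h1, h2, h3]
  have hZpos : 0 < Z := by
    rw [hZ_def']
    exact Finset.sum_pos (fun i _ => hzpos i) ⟨⟨0, hm0⟩, Finset.mem_univ _⟩
  have hρpos : ∀ i, 0 < ρ i := by
    intro i; rw [hρ_apply]; exact rhoFun_pos hα hβ.le (hzpos i) hζ
  have hrows : ∀ i, ∃ j, A i j ≠ 0 := by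
    intro i; by_contra hcon; push_neg at hcon
    have h0 : z i = 0 := by
      rw [hz_apply]; exact Finset.sum_eq_zero fun j _ => by rw [hcon j, abs_zero]
    exact (hzpos i).ne' h0
  -- Step 1 : lower bounds on ζ₁
  have hid : ∀ i, ζ₁ * ρ i = α * z i * Real.sqrt (ρ i) + β * z i := by
    intro i; rw [hρ_apply]; exact rhoFun_identity hα.le hβ.le (hzpos i).le hζ
  have hζβZ : β * Z ≤ ζ₁ := by
    have h2 : ζ₁ = ∑ i, (α * z i * Real.sqrt (ρ i) + β * z i) := by
      calc ζ₁ = ζ₁ * ∑ i, ρ i := by rw [hρsum']; ring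
        _ = ∑ i, ζ₁ * ρ i := Finset.mul_sum _ _ _
        _ = _ := Finset.sum_congr rfl (fun i _ => hid i)
    have h3 : ∑ i, β * z i ≤ ∑ i, (α * z i * Real.sqrt (ρ i) + β * z i) :=
      Finset.sum_le_sum (fun i _ => le_add_of_nonneg_left
        (mul_nonneg (mul_nonneg hα.le (hzpos i).le) (Real.sqrt_nonneg _)))
    calc β * Z = ∑ i, β * z i := by rw [hZ_def', Finset.mul_sum]
      _ ≤ _ := h3
      _ = ζ₁ := h2.symm
  have hζsq : α^2 * Z^2 / m ≤ ζ₁^2 := by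
    have h1 : ∀ i, α^2*(z i)^2/ζ₁^2 ≤ ρ i := by
      intro i; rw [hρ_apply]; exact rhoFun_ge hα hβ.le (hzpos i) hζ
    have h2 : ∑ i, α^2*(z i)^2/ζ₁^2 ≤ 1 := hρsum' ▸ Finset.sum_le_sum (fun i _ => h1 i)
    have h3 : Z^2 ≤ (m:ℝ) * ∑ i, (z i)^2 := by
      have h := sq_sum_le_card_mul_sum_sq (s := Finset.univ) (f := z)
      simpa [hZ_def'] using h
    have h4 : α^2 * (∑ i, (z i)^2) ≤ ζ₁^2 := by
      have e : ∑ i, α^2*(z i)^2/ζ₁^2 = α^2 * (∑ i, (z i)^2) / ζ₁^2 := by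
        rw [← Finset.sum_div, ← Finset.mul_sum]
      rw [e, div_le_one (by positivity)] at h2
      linarith
    rw [div_le_iff₀ hm']
    have h5 := mul_le_mul_of_nonneg_left h3 (sq_nonneg α)
    have h6 := mul_le_mul_of_nonneg_left h4 hm'.le
    nlinarith only [h5, h6]
  have hαT : α * T ≤ 3/20 * ζ₁ := aux_alphaT hm' hTsq hζsq hα hT0 hζ
  have hβT : β * T ≤ 1/50 * ζ₁ := aux_betaT hm50 hTsq hζβZ hβ hT0 hZpos.le hζ
  -- Step 2 : upper bounds for p*
  have hterm : ∀ i j, A i j^2 / p i j = |A i j| * (z i / ρ i) := by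
    intro i j
    rcases eq_or_ne (A i j) 0 with h|h
    · simp [hpval, h]
    · have hz' := (hzpos i).ne'
      have hρ' := (hρpos i).ne'
      have habs : |A i j| ≠ 0 := abs_ne_zero.2 h
      have hsq : A i j^2 = |A i j|^2 := (sq_abs _).symm
      rw [hpval, hsq]
      field_simp
  have hDrow : ∀ i, (∑ j, A i j^2 / p i j) ≤ ζ₁^2/α^2 := by
    intro i
    have e : ∑ j, A i j^2/p i j = (z i)^2 / ρ i := by
      calc ∑ j, A i j^2/p i j = ∑ j, |A i j| * (z i/ρ i) :=
            Finset.sum_congr rfl (fun j _ => hterm i j)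
        _ = (∑ j, |A i j|) * (z i/ρ i) := (Finset.sum_mul _ _ _).symm
        _ = z i * (z i / ρ i) := by rw [← hz_apply i]
        _ = (z i)^2/ρ i := by ring
    rw [e]
    have h := rhoFun_zsq_div_le (β := β) hα hβ.le (hzpos i) hζ
    rw [← hρ_apply] at h
    exact h
  have hDcol : ∀ j, (∑ i, A i j^2 / p i j) ≤ ζ₁^2/α^2 := by
    intro j
    have step1 : ∀ i, A i j^2/p i j ≤ (ζ₁^2/α^2) * (|A i j|/z i) := by
      intro i
      rw [hterm i j]
      have h1 : (z i)^2/ρ i ≤ ζ₁^2/α^2 := by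
        have h := rhoFun_zsq_div_le (β := β) hα hβ.le (hzpos i) hζ
        rw [← hρ_apply] at h; exact h
      have h2 : z i / ρ i ≤ (ζ₁^2/α^2) / z i := by
        rw [div_le_div_iff₀ (hρpos i) (hzpos i)]
        have h3 := (div_le_iff₀ (hρpos i)).mp h1
        rw [← sq]
        exact h3
      calc |A i j| * (z i/ρ i) ≤ |A i j| * ((ζ₁^2/α^2)/z i) :=
            mul_le_mul_of_nonneg_left h2 (abs_nonneg _)
        _ = (ζ₁^2/α^2) * (|A i j|/z i) := by ring
    have step2 : ∑ i, |A i j|/z i ≤ 1 := by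
      rcases eq_or_ne (∑ i', |A i' j|) 0 with hc|hc
      · have hall : ∀ i, |A i j| = 0 := by
          intro i
          have h1 : |A i j| ≤ ∑ i', |A i' j| :=
            Finset.single_le_sum (f := fun i' => |A i' j|) (fun _ _ => abs_nonneg _) (Finset.mem_univ i)
          have h0 : 0 ≤ |A i j| := abs_nonneg _
          rw [hc] at h1; linarith
        have : ∀ i, |A i j|/z i = 0 := fun i => by rw [hall i, zero_div]
        rw [Finset.sum_congr rfl (fun i _ => this i)]
        simp
      · have hcpos : 0 < ∑ i', |A i' j| :=
          lt_of_le_of_ne (Finset.sum_nonneg fun _ _ => abs_nonneg _) (Ne.symm hc)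
        have hb : ∀ i, |A i j|/z i ≤ |A i j|/(∑ i', |A i' j|) := by
          intro i
          apply div_le_div_of_nonneg_left (abs_nonneg _) hcpos
          rw [hz_apply]; exact hskew i j
        calc ∑ i, |A i j|/z i ≤ ∑ i, |A i j|/(∑ i', |A i' j|) :=
              Finset.sum_le_sum (fun i _ => hb i)
          _ = (∑ i, |A i j|)/(∑ i', |A i' j|) := by rw [← Finset.sum_div]
          _ = 1 := div_self hc
    calc ∑ i, A i j^2/p i j ≤ ∑ i, (ζ₁^2/α^2) * (|A i j|/z i) :=
          Finset.sum_le_sum (fun i _ => step1 i)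
      _ = (ζ₁^2/α^2) * ∑ i, |A i j|/z i := (Finset.mul_sum _ _ _).symm
      _ ≤ (ζ₁^2/α^2) * 1 := mul_le_mul_of_nonneg_left step2 (by positivity)
      _ = ζ₁^2/α^2 := mul_one _
  have hAAT : ‖A * Aᵀ‖ ≤ T^2 := by
    calc ‖A * Aᵀ‖ ≤ ‖A‖ * ‖Aᵀ‖ := Matrix.l2_opNorm_mul A Aᵀ
      _ = ‖A‖ * ‖A‖ := by
          rw [← Matrix.conjTranspose_eq_transpose_of_trivial, Matrix.l2_opNorm_conjTranspose]
      _ = T^2 := by rw [hT_eq]; ring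
  have hATA : ‖Aᵀ * A‖ ≤ T^2 := by
    calc ‖Aᵀ * A‖ ≤ ‖Aᵀ‖ * ‖A‖ := Matrix.l2_opNorm_mul Aᵀ A
      _ = ‖A‖ * ‖A‖ := by
          rw [← Matrix.conjTranspose_eq_transpose_of_trivial, Matrix.l2_opNorm_conjTranspose]
      _ = T^2 := by rw [hT_eq]; ring
  have hppos : ∀ i j, 0 ≤ p i j := by
    intro i j
    rw [hpval]
    exact div_nonneg (mul_nonneg (hρpos i).le (abs_nonneg _)) (hzpos i).le
  have hdiagbound : ∀ (k : ℕ) (d : Fin k → ℝ) (M : Matrix (Fin k) (Fin k) ℝ) (c e : ℝ),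
      (∀ i, 0 ≤ d i) → (∀ i, d i ≤ c) → 0 ≤ c → ‖M‖ ≤ e → specNorm (Matrix.diagonal d - M) ≤ c + e := by
    intro k d M c e hd0 hdc hc hM
    rw [specNorm_eq]
    calc ‖Matrix.diagonal d - M‖ ≤ ‖(Matrix.diagonal d : Matrix (Fin k) (Fin k) ℝ)‖ + ‖M‖ :=
          norm_sub_le _ _
      _ ≤ c + e := by
          have := specNorm_diagonal_le d c hc (fun i => by rw [abs_of_nonneg (hd0 i)]; exact hdc i)
          linarith only [this, hM]
  have hσstar : sigmaSq A p ≤ ζ₁^2/α^2 + T^2 := by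
    apply max_le
    · exact hdiagbound m _ (A * Aᵀ) (ζ₁^2/α^2) (T^2)
        (fun i => Finset.sum_nonneg fun j _ => div_nonneg (sq_nonneg _) (hppos i j))
        hDrow (by positivity) hAAT
    · exact hdiagbound n _ (Aᵀ * A) (ζ₁^2/α^2) (T^2)
        (fun j => Finset.sum_nonneg fun i _ => div_nonneg (sq_nonneg _) (hppos i j))
        hDcol (by positivity) hATA
  have hRstar : Rp A p ≤ ζ₁/β + T := by
    apply Real.sSup_le
    · rintro x ⟨i, j, hpij, rfl⟩
      have hAij : A i j ≠ 0 := by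
        intro h0
        rw [hpval, h0] at hpij
        simp at hpij
      have habs : (0:ℝ) < |A i j| := abs_pos.2 hAij
      have hval : |A i j / p i j| = z i / ρ i := by
        rw [abs_div, abs_of_pos hpij, hpval, div_div_eq_mul_div,
          mul_comm (ρ i) |A i j|, mul_div_mul_left _ _ habs.ne']
      rw [specNorm_eq]
      calc ‖A - Matrix.single i j (A i j / p i j)‖
          ≤ ‖A‖ + ‖Matrix.single i j (A i j / p i j)‖ := norm_sub_le _ _
        _ ≤ T + |A i j / p i j| := by
            rw [hT_eq]; exact add_le_add (le_refl _) (specNorm_stdBasis_le _ _ _)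
        _ = T + z i / ρ i := by rw [hval]
        _ ≤ T + ζ₁/β := by
            have h := rhoFun_z_div_le hα hβ (hzpos i) hζ
            rw [← hρ_apply] at h
            linarith only [h]
        _ = ζ₁/β + T := by ring
    · have h5 := div_nonneg hζ.le hβ.le
      linarith only [h5, hT0]
  -- Step 3 : lower bounds for q
  have hσq0 : 0 ≤ sigmaSq A q := sigmaSq_nonneg A q
  set σq := Real.sqrt (sigmaSq A q) with hσq_def
  have hσqsq : σq^2 = sigmaSq A q := Real.sq_sqrt hσq0
  have hσqnn : 0 ≤ σq := Real.sqrt_nonneg _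
  clear_value σq
  obtain ⟨j00, hA00⟩ := hrows ⟨0, hm0⟩
  have hRq0 : 0 < Rp A q :=
    Rp_pos (by omega) A q hrows ⟨0, hm0⟩ j00 (hqpos _ _ hA00)
  have hRppos : 0 < Rp A p := by
    apply Rp_pos (by omega) A p hrows ⟨0, hm0⟩ j00
    rw [hpval]
    have := hρpos ⟨0, hm0⟩
    have := hzpos ⟨0, hm0⟩
    have := abs_pos.2 hA00
    positivity
  have hDrq : ∀ i, (∑ j, A i j^2 / q i j) ≤ sigmaSq A q + T^2 := by
    intro i
    have hd0 : ∀ i', 0 ≤ ∑ j, A i' j^2/q i' j :=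
      fun i' => Finset.sum_nonneg fun j _ => div_nonneg (sq_nonneg _) (hq0 i' j)
    set D := Matrix.diagonal (fun i' => ∑ j, A i' j^2/q i' j) with hD_def
    have h1 : (∑ j, A i j^2/q i j) ≤ ‖D‖ := by
      have h := abs_entry_le_specNorm D i i
      rw [hD_def, Matrix.diagonal_apply_eq, abs_of_nonneg (hd0 i)] at h
      exact h
    have h2 : ‖D‖ ≤ ‖D - A*Aᵀ‖ + ‖A*Aᵀ‖ := by
      calc ‖D‖ = ‖(D - A*Aᵀ) + A*Aᵀ‖ := by rw [sub_add_cancel]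
        _ ≤ _ := norm_add_le _ _
    have h3 : ‖D - A*Aᵀ‖ ≤ sigmaSq A q := by
      rw [← specNorm_eq]
      exact le_max_left _ _
    linarith only [h1, h2, h3, hAAT]
  -- Step 4 : key inequality
  have hkey : 83/100 * ζ₁ ≤ α * σq + β * Rp A q := by
    set r : Fin m → ℝ := fun i => ∑ j, q i j with hr_def
    have hr_apply : ∀ i, r i = ∑ j, q i j := fun _ => rfl
    have hrsum : ∑ i, r i = 1 := hqsum
    clear_value r
    have hne : Nonempty (Fin m) := ⟨⟨0, hm0⟩⟩
    obtain ⟨i, hri⟩ : ∃ i, r i ≤ ρ i := by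
      by_contra hcon; push_neg at hcon
      have h := Finset.sum_lt_sum_of_nonempty Finset.univ_nonempty (fun i _ => hcon i)
      rw [hρsum', hrsum] at h
      exact lt_irrefl _ h
    obtain ⟨j', hAij'⟩ := hrows i
    have hri0 : 0 < r i := by
      rw [hr_apply]
      exact lt_of_lt_of_le (hqpos i j' hAij')
        (Finset.single_le_sum (fun j _ => hq0 i j) (Finset.mem_univ j'))
    have hCS : (z i)^2 ≤ (∑ j, A i j^2/q i j) * r i := by
      have hcs := Finset.sum_mul_sq_le_sq_mul_sq Finset.univ
        (fun j => |A i j|/Real.sqrt (q i j)) (fun j => Real.sqrt (q i j))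
      have e1 : ∀ j, (|A i j|/Real.sqrt (q i j)) * Real.sqrt (q i j) = |A i j| := by
        intro j
        rcases eq_or_ne (q i j) 0 with h|h
        · have hA0 : A i j = 0 := by
            by_contra hc; exact (hqpos i j hc).ne' h
          rw [h, hA0]; simp
        · rw [div_mul_cancel₀]
          exact Real.sqrt_ne_zero'.2 (lt_of_le_of_ne (hq0 i j) (Ne.symm h))
      have e2 : ∀ j, (|A i j|/Real.sqrt (q i j))^2 = A i j^2/q i j := by
        intro j; rw [div_pow, Real.sq_sqrt (hq0 i j), sq_abs]
      have e3 : ∀ j, (Real.sqrt (q i j))^2 = q i j := fun j => Real.sq_sqrt (hq0 i j)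
      calc (z i)^2 = (∑ j, (|A i j|/Real.sqrt (q i j)) * Real.sqrt (q i j))^2 := by
            rw [hz_apply]; congr 1; exact (Finset.sum_congr rfl fun j _ => (e1 j).symm)
        _ ≤ (∑ j, (|A i j|/Real.sqrt (q i j))^2) * (∑ j, (Real.sqrt (q i j))^2) := hcs
        _ = (∑ j, A i j^2/q i j) * r i := by
            rw [hr_apply]
            congr 1
            · exact Finset.sum_congr rfl fun j _ => e2 j
            · exact Finset.sum_congr rfl fun j _ => e3 j
    have hjmax : ∃ j, A i j ≠ 0 ∧ z i / r i ≤ |A i j| / q i j := by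
      by_contra hcon; push_neg at hcon
      have hSfne : (Finset.univ.filter (fun j => A i j ≠ 0)).Nonempty :=
        ⟨j', Finset.mem_filter.2 ⟨Finset.mem_univ _, hAij'⟩⟩
      have hz_eq : z i = ∑ j ∈ Finset.univ.filter (fun j => A i j ≠ 0), |A i j| := by
        rw [hz_apply]
        exact (Finset.sum_filter_of_ne (fun j _ h => abs_ne_zero.mp h)).symm
      have hlt : ∀ j ∈ Finset.univ.filter (fun j => A i j ≠ 0),
          |A i j| < (z i / r i) * q i j := by
        intro j hj
        have hAj := (Finset.mem_filter.1 hj).2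
        have h := hcon j hAj
        have hq' := hqpos i j hAj
        calc |A i j| = |A i j|/q i j * q i j := by field_simp
          _ < (z i / r i) * q i j := by exact mul_lt_mul_of_pos_right h hq'
      have hsum := Finset.sum_lt_sum_of_nonempty hSfne hlt
      have hle2 : ∑ j ∈ Finset.univ.filter (fun j => A i j ≠ 0), (z i/r i) * q i j
          ≤ (z i/r i) * r i := by
        rw [← Finset.mul_sum]
        apply mul_le_mul_of_nonneg_left _ (div_nonneg (hzpos i).le hri0.le)
        rw [hr_apply]
        exact Finset.sum_le_sum_of_subset_of_nonneg (Finset.filter_subset _ _)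
          (fun j _ _ => hq0 i j)
      have hcontr : z i < z i := by
        calc z i = _ := hz_eq
          _ < _ := hsum
          _ ≤ (z i/r i)*r i := hle2
          _ = z i := by field_simp
      exact lt_irrefl _ hcontr
    obtain ⟨j, hAij, hratio⟩ := hjmax
    have hqij : 0 < q i j := hqpos i j hAij
    have hBent : |A i j| / q i j ≤ Rp A q + T := by
      have h1 : |A i j / q i j| ≤ ‖Matrix.single i j (A i j / q i j)‖ := by
        have h := abs_entry_le_specNorm (Matrix.single i j (A i j / q i j)) i j
        rw [Matrix.single_apply_same] at h
        exact h
      have h2 : ‖Matrix.single i j (A i j / q i j)‖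
          ≤ ‖A‖ + ‖A - Matrix.single i j (A i j / q i j)‖ := by
        calc ‖Matrix.single i j (A i j / q i j)‖
            = ‖A - (A - Matrix.single i j (A i j / q i j))‖ := by rw [sub_sub_cancel]
          _ ≤ _ := norm_sub_le _ _
      have h3 : ‖A - Matrix.single i j (A i j / q i j)‖ ≤ Rp A q := by
        rw [← specNorm_eq]; exact le_Rp A q i j hqij
      have habs2 : |A i j / q i j| = |A i j| / q i j := by
        rw [abs_div, abs_of_pos hqij]
      rw [hT_eq, ← habs2]
      linarith only [h1, h2, h3]
    have hDiT : z i / Real.sqrt (r i) ≤ σq + T := by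
      apply le_of_sq_le_sq'' (div_nonneg (hzpos i).le (Real.sqrt_nonneg _))
        (by linarith only [hσqnn, hT0])
      have e : (z i / Real.sqrt (r i))^2 = (z i)^2 / r i := by
        rw [div_pow, Real.sq_sqrt hri0.le]
      have h1 : (z i)^2 / r i ≤ ∑ j, A i j^2/q i j := by
        rw [div_le_iff₀ hri0]; exact hCS
      have h2 := hDrq i
      have h3 : sigmaSq A q + T^2 ≤ (σq + T)^2 := by
        nlinarith only [hσqsq, hσqnn, hT0, mul_nonneg hσqnn hT0]
      rw [e]
      linarith only [h1, h2, h3]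
    have hζi : ζ₁ ≤ α * (z i) / Real.sqrt (r i) + β * (z i) / r i := by
      apply rhoFun_mono hα hβ (hzpos i) hζ hri0
      rw [← hρ_apply]
      exact hri
    have hratio' : z i / r i ≤ Rp A q + T := le_trans hratio hBent
    have c1 : α * z i / Real.sqrt (r i) ≤ α * (σq + T) := by
      rw [mul_div_assoc]; exact mul_le_mul_of_nonneg_left hDiT hα.le
    have c2 : β * z i / r i ≤ β * (Rp A q + T) := by
      rw [mul_div_assoc]; exact mul_le_mul_of_nonneg_left hratio' hβ.le
    nlinarith only [hζi, c1, c2, hαT, hβT]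
  -- Step 5 : membership characterizations
  have hmemq : ∀ ε : ℝ, 0 < ε →
      (((m:ℝ) + n) * Real.exp (-((s:ℝ) * ε ^ 2) / (sigmaSq A q + Rp A q * ε / 3)) ≤ δ ↔
        α^2 * sigmaSq A q + β * Rp A q * ε ≤ ε^2) := by
    intro ε hε
    have hD : 0 < sigmaSq A q + Rp A q * ε / 3 := by
      have h5 := mul_pos hRq0 hε
      linarith only [hσq0, h5]
    rw [exp_cond hmn hδ0 hD, ← hL_def, aux_conv hs' hα2 hβ_eq]
  have hmemp : ∀ ε : ℝ, 0 < ε →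
      α^2 * sigmaSq A p + 3 * (β * Rp A p) * ε ≤ 9 * ε^2 →
      ((m:ℝ) + n) * Real.exp (-((s:ℝ) * (3*ε) ^ 2) / (sigmaSq A p + Rp A p * (3*ε) / 3)) ≤ δ := by
    intro ε hε h
    have hσp0 : 0 ≤ sigmaSq A p := sigmaSq_nonneg A p
    have hD : 0 < sigmaSq A p + Rp A p * (3*ε) / 3 := by
      have h5 := mul_pos hRppos (by linarith only [hε] : (0:ℝ) < 3*ε)
      linarith only [hσp0, h5]
    rw [exp_cond hmn hδ0 hD, ← hL_def]
    exact aux_conv2 hs' hα2 hβ_eq h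
  -- Step 6 : main implication
  have h3ε : ∀ ε : ℝ, ε ∈ {ε : ℝ | 0 < ε ∧
      ((m:ℝ) + n) * Real.exp (-((s:ℝ) * ε ^ 2) / (sigmaSq A q + Rp A q * ε / 3)) ≤ δ} →
      (3*ε) ∈ {ε : ℝ | 0 < ε ∧
      ((m:ℝ) + n) * Real.exp (-((s:ℝ) * ε ^ 2) / (sigmaSq A p + Rp A p * ε / 3)) ≤ δ} := by
    intro ε hεmem
    obtain ⟨hε, hcond⟩ := hεmem
    refine ⟨by linarith, ?_⟩
    have hq2 : α^2 * sigmaSq A q + β * Rp A q * ε ≤ ε^2 := (hmemq ε hε).1 hcond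
    have hq3 : (α*σq)^2 + (β * Rp A q)*ε ≤ ε^2 := by
      rw [mul_pow, hσqsq]; linarith only [hq2]
    have hquad : α*σq + β * Rp A q ≤ 5/4*ε :=
      quad_bound (mul_nonneg hα.le hσqnn) (mul_nonneg hβ.le hRq0.le) hε hq3
    have hζε : ζ₁ ≤ 125/83 * ε := by linarith only [hkey, hquad]
    exact hmemp ε hε
      (aux_main (aux_b1 hα hT0 hσstar hαT) (aux_b2 hβ hRstar hβT) hζ.le hε hζε)
  -- Step 7 : conclusion
  have hbddSp : BddBelow {ε : ℝ | 0 < ε ∧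
      ((m:ℝ) + n) * Real.exp (-((s:ℝ) * ε ^ 2) / (sigmaSq A p + Rp A p * ε / 3)) ≤ δ} :=
    ⟨0, fun x hx => hx.1.le⟩
  have hSqne : Set.Nonempty {ε : ℝ | 0 < ε ∧
      ((m:ℝ) + n) * Real.exp (-((s:ℝ) * ε ^ 2) / (sigmaSq A q + Rp A q * ε / 3)) ≤ δ} := by
    have hε0pos : 0 < α*σq + β * Rp A q := by
      have h5 := mul_pos hβ hRq0
      have h6 := mul_nonneg hα.le hσqnn
      linarith only [h5, h6]
    refine ⟨α*σq + β * Rp A q, ⟨hε0pos, ?_⟩⟩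
    rw [hmemq _ hε0pos]
    have h := aux_eps0 (mul_nonneg hα.le hσqnn) (mul_nonneg hβ.le hRq0.le)
    rw [mul_pow, hσqsq] at h
    linarith only [h]
  have h1 : ∀ ε ∈ {ε : ℝ | 0 < ε ∧
      ((m:ℝ) + n) * Real.exp (-((s:ℝ) * ε ^ 2) / (sigmaSq A q + Rp A q * ε / 3)) ≤ δ},
      eps1 s δ A p ≤ 3*ε := fun ε hε => csInf_le hbddSp (h3ε ε hε)
  have h2 : eps1 s δ A p / 3 ≤ eps1 s δ A q := by
    apply le_csInf hSqne
    intro ε hε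
    linarith only [h1 ε hε]
  linarith only [h2]
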